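/- arXiv:1711.00420 — 2 statements merged into one kernel-verified Lean document; each statement's English description precedes it below -/
import Mathlib

section
/- ε-insertion and ε-extraction are mutually inverse: for a semistandard (X,λ)-tableau T, (a) T = ((T ←ε x) →ε a) where a is the added node of the insertion, for every x ∈ X; (b) T = ((T →ε u) ←ε y) where y is the extracted letter, for every removable node u of [λ]. -/
namespace SuperRSK

variable {X Y : Type*}

/-- The super order `≺` on a superalphabet: `a ≺ b` iff (`a` odd, `b` even), or
(both even and `a < b`), or (both odd and `a > b`). Odd means parity `true`. -/
def SuperPrec [LinearOrder X] (par : X → Bool) (a b : X) : Prop :=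
  (par a = true ∧ par b = false) ∨
  (par a = false ∧ par b = false ∧ a < b) ∨
  (par a = true ∧ par b = true ∧ b < a)

/-- The `δ`-coordinate of a node: row if `δ = false`, column if `δ = true`. -/
def coord (δ : Bool) (u : ℕ × ℕ) : ℕ := if δ then u.2 else u.1

/-- A tableau is a function `ℕ × ℕ → WithTop X`, equal to `⊤` outside its diagram.
Semistandard: the support is a Young diagram and entries are non-decreasing
(both encoded by monotonicity into `WithTop X`), equal entries in a row are even,
and equal entries in a column are odd. -/
def IsSStd [LinearOrder X] (par : X → Bool) (T : ℕ × ℕ → WithTop X) : Prop :=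
  (∀ u v : ℕ × ℕ, u.1 ≤ v.1 → u.2 ≤ v.2 → T u ≤ T v) ∧
  (∀ u v : ℕ × ℕ, ∀ a : X, u.1 = v.1 → u.2 < v.2 → T u = (a : WithTop X) →
    T v = (a : WithTop X) → par a = false) ∧
  (∀ u v : ℕ × ℕ, ∀ a : X, u.2 = v.2 → u.1 < v.1 → T u = (a : WithTop X) →
    T v = (a : WithTop X) → par a = true)

/-- A standard tableau: semistandard with no repeated letters. -/
def IsStd [LinearOrder X] (par : X → Bool) (T : ℕ × ℕ → WithTop X) : Prop :=
  IsSStd par T ∧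
  ∀ u v : ℕ × ℕ, ∀ a : X, T u = (a : WithTop X) → T v = (a : WithTop X) → u = v

/-- The comparison used in `ε`-insertion: strict for `ε = false`, weak for `ε = true`. -/
def cmpIns [LinearOrder X] (ε : Bool) (x : X) (v : WithTop X) : Prop :=
  if ε then (x : WithTop X) ≤ v else (x : WithTop X) < v

/-- The comparison used in `ε`-extraction: strict for `ε = false`, weak for `ε = true`. -/
def cmpExt [LinearOrder X] (ε : Bool) (y : X) (v : WithTop X) : Prop :=
  if ε then v ≤ (y : WithTop X) else v < (y : WithTop X)

/-- `BumpSeq ε par T x b xs m` says `b 0, …, b (m-1)` is the bumped node sequence and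
`xs 0, …, xs (m-1)` the bumped letter sequence for the `ε`-insertion of `x` into `T`:
`xs 0 = x`; at step `j` the current letter `xs j` is placed at the smallest node `b j`
of the `i`-th row (if `ε + parity (xs j) = 0`) or column (if `= 1`) satisfying the
`ε`-comparison, where `i = 0` at the start and afterwards is one more than the
corresponding coordinate of the previous bumped node; the bumped letter becomes the
next inserted letter, until an empty node (`⊤`) is reached. -/
def BumpSeq [LinearOrder X] (ε : Bool) (par : X → Bool) (T : ℕ × ℕ → WithTop X)
    (x : X) (b : ℕ → ℕ × ℕ) (xs : ℕ → X) (m : ℕ) : Prop :=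
  0 < m ∧ xs 0 = x ∧
  (∀ j, j + 1 < m → T (b j) = (xs (j + 1) : WithTop X)) ∧
  T (b (m - 1)) = ⊤ ∧
  ∀ j, j < m →
    (coord (Bool.xor ε (par (xs j))) (b j) =
      (if j = 0 then 0 else coord (Bool.xor ε (par (xs j))) (b (j - 1)) + 1)) ∧
    cmpIns ε (xs j) (T (b j)) ∧
    ∀ v : ℕ × ℕ,
      coord (Bool.xor ε (par (xs j))) v = coord (Bool.xor ε (par (xs j))) (b j) →
      cmpIns ε (xs j) (T v) →
      coord (!(Bool.xor ε (par (xs j)))) (b j) ≤ coord (!(Bool.xor ε (par (xs j)))) v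

/-- `InsResult T b xs m R` says `R` is the tableau obtained from `T` by the insertion
with bumped nodes `b` and bumped letters `xs`: `R (b k) = xs k` and `R` agrees with `T`
elsewhere. -/
def InsResult [LinearOrder X] (T : ℕ × ℕ → WithTop X) (b : ℕ → ℕ × ℕ) (xs : ℕ → X)
    (m : ℕ) (R : ℕ × ℕ → WithTop X) : Prop :=
  (∀ k, k < m → R (b k) = (xs k : WithTop X)) ∧
  ∀ u : ℕ × ℕ, (∀ k, k < m → u ≠ b k) → R u = T u

/-- `ExtractSeq ε par T u c ys m` says `c 0, …, c (m-1)` is the unbumped node sequence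
and `ys 0, …, ys (m-1)` the unbumped letter sequence for the `ε`-extraction at `u`:
`c 0 = u`, `ys 0 = T u`; at each step `c (j+1)` is the greatest node, in the row/column
(according to `ε` plus the parity of `ys j`) preceding that of `c j`, whose entry is
`ε`-below `ys j`; the process stops upon reaching the first row/column. -/
def ExtractSeq [LinearOrder X] (ε : Bool) (par : X → Bool) (T : ℕ × ℕ → WithTop X)
    (u : ℕ × ℕ) (c : ℕ → ℕ × ℕ) (ys : ℕ → X) (m : ℕ) : Prop :=
  0 < m ∧ c 0 = u ∧ T u = (ys 0 : WithTop X) ∧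
  (∀ j, j + 1 < m →
    0 < coord (Bool.xor ε (par (ys j))) (c j) ∧
    coord (Bool.xor ε (par (ys j))) (c (j + 1)) + 1 =
      coord (Bool.xor ε (par (ys j))) (c j) ∧
    T (c (j + 1)) = (ys (j + 1) : WithTop X) ∧
    cmpExt ε (ys j) (T (c (j + 1))) ∧
    ∀ v : ℕ × ℕ,
      coord (Bool.xor ε (par (ys j))) v + 1 = coord (Bool.xor ε (par (ys j))) (c j) →
      cmpExt ε (ys j) (T v) →
      coord (!(Bool.xor ε (par (ys j)))) v ≤ coord (!(Bool.xor ε (par (ys j)))) (c (j + 1))) ∧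
  coord (Bool.xor ε (par (ys (m - 1)))) (c (m - 1)) = 0

/-- `ExtResult T c ys m R` says `R` is the tableau obtained from `T` by the extraction
with unbumped nodes `c` and letters `ys`: each `c k` (`k ≥ 1`) receives `ys (k-1)`, the
initial node `c 0` is emptied, and `R` agrees with `T` elsewhere. -/
def ExtResult [LinearOrder X] (T : ℕ × ℕ → WithTop X) (c : ℕ → ℕ × ℕ) (ys : ℕ → X)
    (m : ℕ) (R : ℕ × ℕ → WithTop X) : Prop :=
  (∀ k, 0 < k → k < m → R (c k) = (ys (k - 1) : WithTop X)) ∧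
  (∀ v : ℕ × ℕ, (∀ k, k < m → v ≠ c k) → R v = T v) ∧
  ((∀ k, 0 < k → k < m → c 0 ≠ c k) → R (c 0) = ⊤)

lemma node_eq {δ : Bool} {u v : ℕ × ℕ} (h1 : coord δ u = coord δ v)
    (h2 : coord (!δ) u = coord (!δ) v) : u = v := by
  cases δ <;> simp [coord] at h1 h2 <;> exact Prod.ext (by assumption) (by assumption)

lemma IsSStd.mono_coord [LinearOrder X] {par : X → Bool} {T : ℕ × ℕ → WithTop X}
    (hT : IsSStd par T) (δ : Bool) {u v : ℕ × ℕ}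
    (h1 : coord δ u = coord δ v) (h2 : coord (!δ) u ≤ coord (!δ) v) : T u ≤ T v := by
  cases δ <;> simp [coord] at h1 h2 <;> exact hT.1 u v (by omega) (by omega)

lemma IsSStd.par_line [LinearOrder X] {par : X → Bool} {T : ℕ × ℕ → WithTop X}
    (hT : IsSStd par T) (δ : Bool) {u v : ℕ × ℕ} {a : X}
    (h1 : coord δ u = coord δ v) (h2 : coord (!δ) u < coord (!δ) v)
    (hu : T u = (a : WithTop X)) (hv : T v = (a : WithTop X)) : par a = δ := by
  cases δ
  · simp [coord] at h1 h2; exact hT.2.1 u v a h1 h2 hu hv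
  · simp [coord] at h1 h2; exact hT.2.2 u v a h1 h2 hu hv

lemma cmpIns_le [LinearOrder X] {ε : Bool} {x : X} {v : WithTop X}
    (h : cmpIns ε x v) : (x : WithTop X) ≤ v := by
  cases ε <;> simp [cmpIns] at h
  exacts [h.le, h]

lemma cmpExt_le [LinearOrder X] {ε : Bool} {y : X} {v : WithTop X}
    (h : cmpExt ε y v) : v ≤ (y : WithTop X) := by
  cases ε <;> simp [cmpExt] at h
  exacts [h.le, h]

lemma cmpExt_coe_comm [LinearOrder X] {ε : Bool} {a y : X} :
    cmpExt ε y (a : WithTop X) ↔ cmpIns ε a (y : WithTop X) := by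
  cases ε <;> simp [cmpExt, cmpIns]

lemma coord_mk_shift (δ : Bool) (u : ℕ × ℕ) :
    ∃ w : ℕ × ℕ, coord δ w = coord δ u + 1 ∧ coord (!δ) w = coord (!δ) u ∧
      (w = (u.1 + 1, u.2) ∨ w = (u.1, u.2 + 1)) := by
  cases δ
  · exact ⟨(u.1 + 1, u.2), by simp [coord], by simp [coord], Or.inl rfl⟩
  · exact ⟨(u.1, u.2 + 1), by simp [coord], by simp [coord], Or.inr rfl⟩

lemma partA [LinearOrder X] (ε : Bool) (par : X → Bool) (T : ℕ × ℕ → WithTop X)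
    (hT : IsSStd par T) (x : X) (b : ℕ → ℕ × ℕ) (xs : ℕ → X) (m : ℕ) (R : ℕ × ℕ → WithTop X)
    (c : ℕ → ℕ × ℕ) (ys : ℕ → X) (m' : ℕ) (S : ℕ × ℕ → WithTop X)
    (hB : BumpSeq ε par T x b xs m) (hR : InsResult T b xs m R)
    (hE : ExtractSeq ε par R (b (m - 1)) c ys m') (hS : ExtResult R c ys m' S) : S = T := by
  obtain ⟨hm, hx0, hTb, hTop, hstep⟩ := hB
  obtain ⟨hRb, hRoff⟩ := hR
  obtain ⟨hm', hc0, hy0, hEstep, hfin⟩ := hE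
  obtain ⟨hSc, hSoff, hS0⟩ := hS
  -- chain facts about xs
  have xs_step : ∀ k, k + 1 < m → cmpIns ε (xs k) ((xs (k + 1) : WithTop X)) := by
    intro k hk
    have h := (hstep k (by omega)).2.1
    rwa [hTb k hk] at h
  have xs_le : ∀ j k, j ≤ k → k < m → (xs j : WithTop X) ≤ xs k := by
    intro j k hjk
    induction k with
    | zero => intro _; have : j = 0 := by omega
              subst this; exact le_rfl
    | succ n ih =>
      intro hk
      rcases Nat.lt_or_ge j (n + 1) with h | h
      · exact (ih (by omega) (by omega)).trans (cmpIns_le (xs_step n hk))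
      · have : j = n + 1 := by omega
        subst this; exact le_rfl
  have xs_lt : ε = false → ∀ j k, j < k → k < m → (xs j : WithTop X) < xs k := by
    intro hε j k hjk hk
    have h1 : (xs j : WithTop X) ≤ xs (k - 1) := xs_le j (k - 1) (by omega) (by omega)
    have h2 := xs_step (k - 1) (by omega)
    rw [hε] at h2; simp [cmpIns] at h2
    rw [show k - 1 + 1 = k by omega] at h2
    exact h1.trans_lt (by exact_mod_cast h2)
  -- telescoping for equal-letter stretches
  have tel : ∀ i k, i ≤ k → k < m → (∀ t, i ≤ t → t ≤ k → xs t = xs i) →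
      coord (Bool.xor ε (par (xs i))) (b k) = coord (Bool.xor ε (par (xs i))) (b i) + (k - i) := by
    intro i k hik
    induction k with
    | zero => intro _ _; have : i = 0 := by omega
              subst this; simp
    | succ n ih =>
      intro hk hall
      rcases Nat.lt_or_ge i (n + 1) with h | h
      · have h1 := ih (by omega) (by omega) (fun t ht1 ht2 => hall t ht1 (by omega))
        have h2 := (hstep (n + 1) hk).1
        rw [if_neg (by omega), hall (n + 1) (by omega) le_rfl] at h2
        simp only [Nat.add_sub_cancel] at h2
        omega
      · have : i = n + 1 := by omega
        subst this; simp
  -- the key uniqueness claim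
  have claim : ∀ i, 1 ≤ i → i < m → ∀ w : ℕ × ℕ,
      coord (Bool.xor ε (par (xs i))) w = coord (Bool.xor ε (par (xs i))) (b (i - 1)) →
      coord (!(Bool.xor ε (par (xs i)))) (b (i - 1)) < coord (!(Bool.xor ε (par (xs i)))) w →
      ¬ cmpExt ε (xs i) (R w) := by
    intro i hi1 him w hline hlt hcmp
    have hTbi : T (b (i - 1)) = (xs i : WithTop X) := by
      have h := hTb (i - 1) (by omega)
      rwa [show i - 1 + 1 = i by omega] at h
    have hmono : T (b (i - 1)) ≤ T w := hT.mono_coord _ hline.symm hlt.le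
    by_cases hw : ∃ k, k < m ∧ w = b k
    · obtain ⟨k, hk, rfl⟩ := hw
      rw [hRb k hk] at hcmp
      cases hε : ε with
      | false =>
        rw [hε] at hcmp; simp [cmpExt] at hcmp
        have hki : k < i := by
          by_contra h
          exact absurd hcmp (not_lt.mpr (by exact_mod_cast xs_le i k (by omega) hk))
        have h2 : (xs i : WithTop X) ≤ xs (k + 1) := by
          rw [← hTbi, ← hTb k (by omega)]; exact hmono
        have hk1 : k + 1 = i := by
          by_contra h
          exact absurd h2 (not_le.mpr (xs_lt hε (k + 1) i (by omega) him))
        have : k = i - 1 := by omega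
        rw [this] at hlt
        exact absurd hlt (lt_irrefl _)
      | true =>
        rw [hε] at hcmp; simp [cmpExt] at hcmp
        rcases Nat.lt_or_ge k i with hki | hki
        · have h2 : (xs i : WithTop X) ≤ xs (k + 1) := by
            rw [← hTbi, ← hTb k (by omega)]; exact hmono
          have h3 : (xs (k + 1) : WithTop X) ≤ xs i := xs_le (k + 1) i (by omega) him
          have heq : T (b k) = (xs i : WithTop X) := by
            rw [hTb k (by omega)]
            exact_mod_cast le_antisymm h3 h2
          have hpar := hT.par_line _ hline.symm hlt hTbi heq
          rw [hε] at hpar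
          simp at hpar
        · have hall : ∀ t, i ≤ t → t ≤ k → xs t = xs i := by
            intro t h1t h2t
            have ha := xs_le i t h1t (by omega)
            have hb := xs_le t k h2t hk
            exact_mod_cast le_antisymm (hb.trans (WithTop.coe_le_coe.mpr hcmp)) ha
          have htel := tel i k hki hk hall
          have hci : coord (Bool.xor ε (par (xs i))) (b i) =
              coord (Bool.xor ε (par (xs i))) (b (i - 1)) + 1 := by
            have h := (hstep i (by omega)).1
            rwa [if_neg (by omega)] at h
          omega
    · rw [hRoff _ (fun k hk hkeq => hw ⟨k, hk, hkeq⟩)] at hcmp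
      rw [hTbi] at hmono
      cases hε : ε with
      | false =>
        rw [hε] at hcmp; simp [cmpExt] at hcmp
        exact absurd hcmp (not_lt.mpr hmono)
      | true =>
        rw [hε] at hcmp; simp [cmpExt] at hcmp
        have heqw : T w = (xs i : WithTop X) := le_antisymm hcmp hmono
        have hpar := hT.par_line _ hline.symm hlt hTbi heqw
        rw [hε] at hpar
        simp at hpar
  -- the correspondence
  have corr : ∀ j, j < m → j < m' → c j = b (m - 1 - j) ∧ ys j = xs (m - 1 - j) := by
    intro j
    induction j with
    | zero =>
      intro _ _
      refine ⟨hc0, ?_⟩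
      have h1 := hy0
      rw [hRb (m - 1) (by omega)] at h1
      exact_mod_cast h1.symm
    | succ j ih =>
      intro hjm hjm'
      obtain ⟨hcj, hyj⟩ := ih (by omega) (by omega)
      have hi1 : 1 ≤ m - 1 - j := by omega
      have him : m - 1 - j < m := by omega
      obtain ⟨hpos, hline, hRc, hcmpE, hmax⟩ := hEstep j hjm'
      rw [hyj] at hpos hline hcmpE hmax
      rw [hcj] at hpos hline hmax
      have hci : coord (Bool.xor ε (par (xs (m - 1 - j)))) (b (m - 1 - j)) =
          coord (Bool.xor ε (par (xs (m - 1 - j)))) (b (m - 1 - j - 1)) + 1 := by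
        have h := (hstep (m - 1 - j) him).1
        rwa [if_neg (by omega)] at h
      have hqual : cmpExt ε (xs (m - 1 - j)) (R (b (m - 1 - j - 1))) := by
        rw [hRb (m - 1 - j - 1) (by omega)]
        have h := xs_step (m - 1 - j - 1) (by omega)
        rw [show m - 1 - j - 1 + 1 = m - 1 - j by omega] at h
        exact cmpExt_coe_comm.mpr h
      have h1 := hmax (b (m - 1 - j - 1)) hci.symm hqual
      have h2 : ¬ (coord (!(Bool.xor ε (par (xs (m - 1 - j))))) (b (m - 1 - j - 1)) <
          coord (!(Bool.xor ε (par (xs (m - 1 - j))))) (c (j + 1))) := by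
        intro hlt
        exact claim (m - 1 - j) hi1 him (c (j + 1)) (by omega) hlt hcmpE
      have hcb : c (j + 1) = b (m - 1 - j - 1) :=
        node_eq (δ := Bool.xor ε (par (xs (m - 1 - j)))) (by omega) (by omega)
      refine ⟨by rw [show m - 1 - (j + 1) = m - 1 - j - 1 by omega]; exact hcb, ?_⟩
      have h3 := hRc
      rw [hcb, hRb (m - 1 - j - 1) (by omega)] at h3
      rw [show m - 1 - (j + 1) = m - 1 - j - 1 by omega]
      exact_mod_cast h3.symm
  -- m' = m
  have hm'm : m' = m := by
    by_contra hne
    rcases Nat.lt_or_ge m' m with h | h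
    · obtain ⟨hcj, hyj⟩ := corr (m' - 1) (by omega) (by omega)
      have hf := hfin
      rw [hyj, hcj] at hf
      have hci := (hstep (m - 1 - (m' - 1)) (by omega)).1
      rw [if_neg (by omega)] at hci
      omega
    · have h2 : m < m' := by omega
      obtain ⟨hcj, hyj⟩ := corr (m - 1) (by omega) (by omega)
      have hp := (hEstep (m - 1) (by omega)).1
      rw [hyj, hcj, show m - 1 - (m - 1) = 0 by omega] at hp
      have h0 := (hstep 0 hm).1
      rw [if_pos rfl] at h0
      omega
  -- assembly
  funext v
  by_cases hv : ∃ k, k < m ∧ v = b k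
  · obtain ⟨k, hk, rfl⟩ := hv
    by_cases hvl : b k = b (m - 1)
    · rw [hvl]
      have hS0' : S (c 0) = ⊤ := by
        apply hS0
        intro k' hk'0 hk'm
        obtain ⟨hck', _⟩ := corr k' (by omega) hk'm
        rw [hc0, hck']
        intro heq
        have hlt : m - 1 - k' + 1 < m := by omega
        have h := hTb (m - 1 - k') hlt
        rw [← heq, hTop] at h
        exact (by simp : (⊤ : WithTop X) ≠ _) h
      have hS1 : S (b (m - 1)) = ⊤ := hc0 ▸ hS0'
      rw [hS1, hTop]
    · have hkne : k ≠ m - 1 := fun h => hvl (by rw [h])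
      have hk1 : k + 1 < m := by omega
      have ht0 : 0 < m - 1 - k := by omega
      have htm : m - 1 - k < m' := by omega
      obtain ⟨hct, _⟩ := corr (m - 1 - k) (by omega) htm
      rw [show m - 1 - (m - 1 - k) = k by omega] at hct
      have hsv := hSc (m - 1 - k) ht0 htm
      obtain ⟨_, hyt1⟩ := corr (m - 1 - k - 1) (by omega) (by omega)
      rw [hct] at hsv
      rw [hsv, hyt1, show m - 1 - (m - 1 - k - 1) = k + 1 by omega, hTb k hk1]
  · have hvc : ∀ k, k < m' → v ≠ c k := by
      intro k hk heq
      obtain ⟨hck, _⟩ := corr k (by omega) hk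
      exact hv ⟨m - 1 - k, by omega, by rw [heq, hck]⟩
    rw [hSoff v hvc, hRoff v (fun k hk hkeq => hv ⟨k, hk, hkeq⟩)]


lemma partB [LinearOrder X] (ε : Bool) (par : X → Bool) (T : ℕ × ℕ → WithTop X)
    (hT : IsSStd par T) (u : ℕ × ℕ) (c : ℕ → ℕ × ℕ) (ys : ℕ → X) (m : ℕ)
    (S : ℕ × ℕ → WithTop X) (b : ℕ → ℕ × ℕ) (xs : ℕ → X) (m' : ℕ) (R : ℕ × ℕ → WithTop X)
    (hu0 : T u ≠ ⊤) (hu1 : T (u.1 + 1, u.2) = ⊤) (hu2 : T (u.1, u.2 + 1) = ⊤)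
    (hE : ExtractSeq ε par T u c ys m) (hS : ExtResult T c ys m S)
    (hB : BumpSeq ε par S (ys (m - 1)) b xs m') (hR : InsResult S b xs m' R) : R = T := by
  obtain ⟨hm, hc0, hy0, hEstep, hfin⟩ := hE
  obtain ⟨hSc, hSoff, hS0⟩ := hS
  obtain ⟨hm', hx0, hSb, hTop', hstep⟩ := hB
  obtain ⟨hRb, hRoff⟩ := hR
  -- entries of T along the extraction path
  have Tc : ∀ i, i < m → T (c i) = (ys i : WithTop X) := by
    intro i hi
    rcases Nat.eq_zero_or_pos i with h0 | h0
    · subst h0; rw [hc0]; exact hy0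
    · have h := (hEstep (i - 1) (by omega)).2.2.1
      rwa [show i - 1 + 1 = i by omega] at h
  -- chain facts about ys
  have ys_step : ∀ k, k + 1 < m → cmpExt ε (ys k) ((ys (k + 1) : WithTop X)) := by
    intro k hk
    have h := (hEstep k hk).2.2.2.1
    rwa [Tc (k + 1) hk] at h
  have ys_anti : ∀ j k, j ≤ k → k < m → (ys k : WithTop X) ≤ ys j := by
    intro j k hjk
    induction k with
    | zero => intro _; have : j = 0 := by omega
              subst this; exact le_rfl
    | succ n ih =>
      intro hk
      rcases Nat.lt_or_ge j (n + 1) with h | h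
      · exact (cmpExt_le (ys_step n hk)).trans (ih (by omega) (by omega))
      · have : j = n + 1 := by omega
        subst this; exact le_rfl
  have ys_lt : ε = false → ∀ j k, j < k → k < m → (ys k : WithTop X) < ys j := by
    intro hε j k hjk hk
    have h1 : (ys (k - 1) : WithTop X) ≤ ys j := ys_anti j (k - 1) (by omega) (by omega)
    have h2 := ys_step (k - 1) (by omega)
    rw [hε] at h2; simp [cmpExt] at h2
    rw [show k - 1 + 1 = k by omega] at h2
    exact lt_of_lt_of_le (by exact_mod_cast h2) h1
  -- telescoping for equal-letter stretches (extraction)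
  have tel : ∀ i k, i ≤ k → k < m → (∀ t, i ≤ t → t < k → ys t = ys i) →
      coord (Bool.xor ε (par (ys i))) (c k) + (k - i) = coord (Bool.xor ε (par (ys i))) (c i) := by
    intro i k hik
    induction k with
    | zero => intro _ _; have : i = 0 := by omega
              subst this; simp
    | succ n ih =>
      intro hk hall
      rcases Nat.lt_or_ge i (n + 1) with h | h
      · have h1 := ih (by omega) (by omega) (fun t ht1 ht2 => hall t ht1 (by omega))
        have h2 := (hEstep n (by omega)).2.1
        rw [hall n (by omega) (by omega)] at h2
        omega
      · have : i = n + 1 := by omega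
        subst this; simp
  -- c 0 is not revisited
  have c0_ne : ∀ k, 0 < k → k < m → c 0 ≠ c k := by
    intro k h0 hk heq
    have hyk : (ys k : WithTop X) = ys 0 := by
      rw [← Tc k hk, ← heq, hc0]; exact hy0
    cases hε : ε with
    | false =>
      have := ys_lt hε 0 k h0 hk
      rw [hyk] at this
      exact absurd this (lt_irrefl _)
    | true =>
      have hall : ∀ t, 0 ≤ t → t < k → ys t = ys 0 := by
        intro t _ htk
        have ha := ys_anti 0 t (by omega) (by omega)
        have hb := ys_anti t k (by omega) hk
        rw [hyk] at hb
        exact_mod_cast le_antisymm ha hb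
      have htel := tel 0 k (by omega) hk hall
      rw [heq] at htel
      omega
  have hSc0 : S (c 0) = ⊤ := hS0 c0_ne
  -- candidates qualify
  have cmpIns_at_c : ∀ i, i < m → cmpIns ε (ys i) (S (c i)) := by
    intro i hi
    rcases Nat.eq_zero_or_pos i with h0 | h0
    · subst h0; rw [hSc0]
      cases ε
      · exact WithTop.coe_lt_top _
      · exact le_top
    · rw [hSc i h0 hi]
      have h := ys_step (i - 1) (by omega)
      rw [show i - 1 + 1 = i by omega] at h
      exact cmpExt_coe_comm.mp h
  -- the key uniqueness claim
  have claim : ∀ i, i < m → ∀ v : ℕ × ℕ,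
      coord (Bool.xor ε (par (ys i))) v = coord (Bool.xor ε (par (ys i))) (c i) →
      coord (!(Bool.xor ε (par (ys i)))) v < coord (!(Bool.xor ε (par (ys i)))) (c i) →
      ¬ cmpIns ε (ys i) (S v) := by
    intro i him v hline hlt hcmp
    have hTci : T (c i) = (ys i : WithTop X) := Tc i him
    have hmono : T v ≤ T (c i) := hT.mono_coord _ hline hlt.le
    by_cases hvk : ∃ k, k < m ∧ v = c k
    · obtain ⟨k, hk, rfl⟩ := hvk
      rcases Nat.eq_zero_or_pos k with hk0 | hk0
      · -- v = c 0 = u, the corner: contradiction via monotonicity past the corner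
        subst hk0
        obtain ⟨w, hw1, hw2, hw3⟩ := coord_mk_shift (!(Bool.xor ε (par (ys i)))) u
        simp only [Bool.not_not] at hw2
        have hwtop : T w = ⊤ := by
          rcases hw3 with h | h <;> rw [h]
          · exact hu1
          · exact hu2
        have hwle : T w ≤ T (c i) := by
          apply hT.mono_coord (Bool.xor ε (par (ys i)))
          · rw [hw2, ← hc0]; exact hline
          · rw [hw1, ← hc0]; omega
        rw [hwtop, hTci] at hwle
        exact absurd (top_le_iff.mp hwle) (by simp)
      · have hSv : S (c k) = (ys (k - 1) : WithTop X) := hSc k hk0 hk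
        rw [hSv] at hcmp
        have h1 : (ys k : WithTop X) ≤ ys i := by
          rw [← Tc k hk, ← hTci]; exact hmono
        have hki : k ≠ i := by
          intro h
          subst h
          exact absurd hlt (lt_irrefl _)
        cases hε : ε with
        | false =>
          rw [hε] at hcmp; simp [cmpIns] at hcmp
          have hkle : k < i := by
            by_contra h
            have := ys_anti i (k - 1) (by omega) (by omega)
            exact absurd hcmp (not_lt.mpr (by exact_mod_cast this))
          have := ys_lt hε k i hkle him
          exact absurd h1 (not_le.mpr this)
        | true =>
          rw [hε] at hcmp; simp [cmpIns] at hcmp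
          rcases Nat.lt_or_ge k i with hki' | hki'
          · -- k < i : squeeze to equality chain, telescope
            have hyk : ys k = ys i := by
              have := ys_anti k i (by omega) him
              exact_mod_cast le_antisymm (by exact_mod_cast h1) (by exact_mod_cast this)
            have hall : ∀ t, k ≤ t → t < i → ys t = ys k := by
              intro t h1t h2t
              have ha := ys_anti k t h1t (by omega)
              have hb := ys_anti t i (by omega) him
              exact_mod_cast le_antisymm ha (by rw [hyk]; exact hb)
            have htel := tel k i (by omega) him hall
            rw [hyk] at htel
            omega
          · -- k > i : squeeze on [i, k-1], telescope
            have hyk1 : ys (k - 1) = ys i := by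
              have := ys_anti i (k - 1) (by omega) (by omega)
              exact_mod_cast le_antisymm this (by exact_mod_cast hcmp)
            have hall : ∀ t, i ≤ t → t < k → ys t = ys i := by
              intro t h1t h2t
              have ha := ys_anti i t h1t (by omega)
              have hb := ys_anti t (k - 1) (by omega) (by omega)
              rw [hyk1] at hb
              exact le_antisymm (by exact_mod_cast ha) (by exact_mod_cast hb)
            have htel := tel i k (by omega) hk hall
            omega
    · have hSv : S v = T v := hSoff v (fun k hk hkeq => hvk ⟨k, hk, hkeq⟩)
      rw [hSv] at hcmp
      cases hε : ε with
      | false =>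
        rw [hε] at hcmp; simp [cmpIns] at hcmp
        rw [hTci] at hmono
        exact absurd hcmp (not_lt.mpr hmono)
      | true =>
        rw [hε] at hcmp; simp [cmpIns] at hcmp
        rw [hTci] at hmono
        have heqv : T v = (ys i : WithTop X) := le_antisymm hmono hcmp
        have hpar := hT.par_line _ hline hlt heqv hTci
        rw [hε] at hpar
        simp at hpar
  -- the correspondence
  have corr : ∀ j, j < m → j < m' → b j = c (m - 1 - j) ∧ xs j = ys (m - 1 - j) := by
    intro j
    induction j with
    | zero =>
      intro h0m h0m'
      refine ⟨?_, hx0⟩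
      obtain ⟨h0, hcmpb, hminb⟩ := hstep 0 h0m'
      rw [if_pos rfl] at h0
      rw [hx0] at h0 hcmpb hminb
      have hle := hminb (c (m - 1)) (by rw [hfin, h0]) (cmpIns_at_c (m - 1) (by omega))
      have hge : ¬ (coord (!(Bool.xor ε (par (ys (m - 1))))) (b 0) <
          coord (!(Bool.xor ε (par (ys (m - 1))))) (c (m - 1))) := fun hlt =>
        claim (m - 1) (by omega) (b 0) (by rw [h0, hfin]) hlt hcmpb
      show b 0 = c (m - 1)
      exact node_eq (δ := Bool.xor ε (par (ys (m - 1)))) (by rw [h0, hfin]) (by omega)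
    | succ j ih =>
      intro hjm hjm'
      obtain ⟨hbj, hxj⟩ := ih (by omega) (by omega)
      have hxj1 : xs (j + 1) = ys (m - 1 - j - 1) := by
        have h := hSb j hjm'
        rw [hbj, hSc (m - 1 - j) (by omega) (by omega)] at h
        exact_mod_cast h.symm
      obtain ⟨-, hlinE, -, -, -⟩ := hEstep (m - 1 - j - 1) (by omega)
      rw [show m - 1 - j - 1 + 1 = m - 1 - j by omega] at hlinE
      obtain ⟨hco, hcmpb, hminb⟩ := hstep (j + 1) hjm'
      rw [if_neg (by omega)] at hco
      simp only [Nat.add_sub_cancel] at hco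
      rw [hxj1] at hco hcmpb hminb
      rw [hbj] at hco
      have hlineq : coord (Bool.xor ε (par (ys (m - 1 - j - 1)))) (b (j + 1)) =
          coord (Bool.xor ε (par (ys (m - 1 - j - 1)))) (c (m - 1 - j - 1)) := by omega
      have hle := hminb (c (m - 1 - j - 1)) hlineq.symm (cmpIns_at_c (m - 1 - j - 1) (by omega))
      have hge : ¬ (coord (!(Bool.xor ε (par (ys (m - 1 - j - 1))))) (b (j + 1)) <
          coord (!(Bool.xor ε (par (ys (m - 1 - j - 1))))) (c (m - 1 - j - 1))) := fun hlt =>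
        claim (m - 1 - j - 1) (by omega) (b (j + 1)) hlineq hlt hcmpb
      have hnode : b (j + 1) = c (m - 1 - j - 1) :=
        node_eq (δ := Bool.xor ε (par (ys (m - 1 - j - 1)))) hlineq (by omega)
      rw [show m - 1 - (j + 1) = m - 1 - j - 1 by omega]
      exact ⟨hnode, hxj1⟩
  -- m' = m
  have hm'm : m' = m := by
    by_contra hne
    rcases Nat.lt_or_ge m' m with h | h
    · obtain ⟨hbj, -⟩ := corr (m' - 1) (by omega) (by omega)
      have ht := hTop'
      rw [hbj, hSc (m - 1 - (m' - 1)) (by omega) (by omega)] at ht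
      exact WithTop.coe_ne_top ht
    · have h2 : m < m' := by omega
      obtain ⟨hbj, -⟩ := corr (m - 1) (by omega) (by omega)
      have hsb := hSb (m - 1) (by omega)
      rw [hbj, show m - 1 - (m - 1) = 0 by omega, hSc0] at hsb
      exact (by simp : (⊤ : WithTop X) ≠ _) hsb
  -- assembly
  funext v
  by_cases hv : ∃ k, k < m ∧ v = c k
  · obtain ⟨k, hk, rfl⟩ := hv
    obtain ⟨hbj, hxj⟩ := corr (m - 1 - k) (by omega) (by omega)
    rw [show m - 1 - (m - 1 - k) = k by omega] at hbj hxj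
    have h := hRb (m - 1 - k) (by omega)
    rw [hbj, hxj] at h
    rw [h, Tc k hk]
  · have hvb : ∀ k, k < m' → v ≠ b k := by
      intro k hk heq
      obtain ⟨hbk, -⟩ := corr k (by omega) hk
      exact hv ⟨m - 1 - k, by omega, by rw [heq, hbk]⟩
    rw [hRoff v hvb, hSoff v (fun k hk hkeq => hv ⟨k, hk, hkeq⟩)]

/-- `ε`-insertion and `ε`-extraction are mutually inverse: extracting at the added node
undoes an insertion, and inserting the extracted letter undoes an extraction. -/
theorem stmt10 [LinearOrder X] (ε : Bool) (par : X → Bool) (T : ℕ × ℕ → WithTop X)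
    (hT : IsSStd par T) :
    (∀ (x : X) (b : ℕ → ℕ × ℕ) (xs : ℕ → X) (m : ℕ) (R : ℕ × ℕ → WithTop X)
       (c : ℕ → ℕ × ℕ) (ys : ℕ → X) (m' : ℕ) (S : ℕ × ℕ → WithTop X),
       BumpSeq ε par T x b xs m → InsResult T b xs m R →
       ExtractSeq ε par R (b (m - 1)) c ys m' → ExtResult R c ys m' S →
       S = T) ∧
    (∀ (u : ℕ × ℕ) (c : ℕ → ℕ × ℕ) (ys : ℕ → X) (m : ℕ) (S : ℕ × ℕ → WithTop X)
       (b : ℕ → ℕ × ℕ) (xs : ℕ → X) (m' : ℕ) (R : ℕ × ℕ → WithTop X),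
       T u ≠ ⊤ → T (u.1 + 1, u.2) = ⊤ → T (u.1, u.2 + 1) = ⊤ →
       ExtractSeq ε par T u c ys m → ExtResult T c ys m S →
       BumpSeq ε par S (ys (m - 1)) b xs m' → InsResult S b xs m' R →
       R = T) := by
  constructor
  · intro x b xs m R c ys m' S hB hR hE hS
    exact partA ε par T hT x b xs m R c ys m' S hB hR hE hS
  · intro u c ys m S b xs m' R hu0 hu1 hu2 hE hS hB hR
    exact partB ε par T hT u c ys m S b xs m' R hu0 hu1 hu2 hE hS hB hR

end SuperRSK
end

section
/- For a semistandard (X,λ)-tableau T: (1) (T ←ε x)'* = (T'* ←ε x*) for every x ∈ X, with the bumped node sequence of the right side being the transposes of the left side's; (2) (T →ε u)'* = (T'* →ε u') for every removable node u of [λ], with the unbumped node sequence similarly transposed. -/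
namespace SuperRSK

variable {X Y : Type*}

private lemma coord_swap (δ : Bool) (u : ℕ × ℕ) : coord δ (u.2, u.1) = coord (!δ) u := by
  cases δ <;> simp [coord]

private lemma xor_not (ε p : Bool) : Bool.xor ε (!p) = !(Bool.xor ε p) := by
  cases ε <;> cases p <;> rfl

/-- For a semistandard tableau `T`, the dual conjugate (transpose with all parities
flipped; the dual order agrees with the original) intertwines `ε`-insertion and
`ε`-extraction, transposing the bumped/unbumped node sequences. -/
theorem stmt12 [LinearOrder X] (ε : Bool) (par : X → Bool) (T : ℕ × ℕ → WithTop X)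
    (hT : IsSStd par T) :
    (∀ (x : X) (b : ℕ → ℕ × ℕ) (xs : ℕ → X) (m : ℕ),
       BumpSeq ε par T x b xs m →
       BumpSeq ε (fun a => !par a) (fun u => T (u.2, u.1)) x
         (fun j => ((b j).2, (b j).1)) xs m ∧
       ∀ R : ℕ × ℕ → WithTop X, InsResult T b xs m R →
         InsResult (fun u => T (u.2, u.1)) (fun j => ((b j).2, (b j).1)) xs m
           (fun u => R (u.2, u.1))) ∧
    (∀ (u : ℕ × ℕ) (c : ℕ → ℕ × ℕ) (ys : ℕ → X) (m : ℕ),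
       ExtractSeq ε par T u c ys m →
       ExtractSeq ε (fun a => !par a) (fun v => T (v.2, v.1)) (u.2, u.1)
         (fun j => ((c j).2, (c j).1)) ys m ∧
       ∀ S : ℕ × ℕ → WithTop X, ExtResult T c ys m S →
         ExtResult (fun v => T (v.2, v.1)) (fun j => ((c j).2, (c j).1)) ys m
           (fun v => S (v.2, v.1))) := by
  clear hT
  constructor
  · rintro x b xs m ⟨hm, hx0, hTb, htop, hstep⟩
    refine ⟨⟨hm, hx0, ?_, ?_, ?_⟩, ?_⟩
    · intro j hj; simpa using hTb j hj
    · simpa using htop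
    · intro j hj
      obtain ⟨h1, h2, h3⟩ := hstep j hj
      refine ⟨?_, ?_, ?_⟩
      · simpa [coord_swap, xor_not, Bool.not_not] using h1
      · simpa using h2
      · intro v hv hcmp
        have h3' := h3 (v.2, v.1) (by simpa [coord_swap, xor_not, Bool.not_not] using hv)
          (by simpa using hcmp)
        simpa [coord_swap, xor_not, Bool.not_not] using h3'
    · rintro R ⟨hR1, hR2⟩
      refine ⟨?_, ?_⟩
      · intro k hk; simpa using hR1 k hk
      · intro u hu
        have := hR2 (u.2, u.1) ?_
        · simpa using this
        · intro k hk heq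
          exact hu k hk (by simp [← heq])
  · rintro u c ys m ⟨hm, hc0, hTu, hstep, hlast⟩
    refine ⟨⟨hm, by simp [hc0], by simpa using hTu, ?_, ?_⟩, ?_⟩
    · intro j hj
      obtain ⟨h0, h1, h2, h3, h4⟩ := hstep j hj
      refine ⟨?_, ?_, ?_, ?_, ?_⟩
      · simpa [coord_swap, xor_not, Bool.not_not] using h0
      · simpa [coord_swap, xor_not, Bool.not_not] using h1
      · simpa using h2
      · simpa using h3
      · intro v hv hcmp
        have h4' := h4 (v.2, v.1) (by simpa [coord_swap, xor_not, Bool.not_not] using hv)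
          (by simpa using hcmp)
        simpa [coord_swap, xor_not, Bool.not_not] using h4'
    · simpa [coord_swap, xor_not, Bool.not_not] using hlast
    · rintro S ⟨hS1, hS2, hS3⟩
      refine ⟨?_, ?_, ?_⟩
      · intro k hk hkm; simpa using hS1 k hk hkm
      · intro v hv
        have := hS2 (v.2, v.1) ?_
        · simpa using this
        · intro k hk heq
          exact hv k hk (by simp [← heq])
      · intro hne
        have : S (c 0) = ⊤ := by
          apply hS3
          intro k hk hkm heq
          exact hne k hk hkm (by simp [heq])
        simpa using this


end SuperRSK
end
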